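/- The constrained quasicontinuum energy decomposes into bulk, surface, and interfacial parts: for every z with all r_j > 0, E^CQC(z) = Σ_{j=−N}^{N} L_j W(D_j) + S_b(D_{−N}) + Σ_{j=−N+1}^{N} S(D_{j−1}, D_j) + S_b(D_N), where L_j := ν_j a₀, D_j := r_j / a₀, W(D) := (φ(D a₀) + φ(2 D a₀))/a₀, S_b(D) := −½ φ(2 D a₀), and S(D₁, D₂) := −½ φ(2 D₁ a₀) + φ(D₁ a₀ + D₂ a₀) − ½ φ(2 D₂ a₀). -/

import Mathlib

open Finset

/-- Strain-energy density `W(D) := (φ(D a₀) + φ(2 D a₀))/a₀`. -/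
noncomputable def Wdens (φ : ℝ → ℝ) (a₀ D : ℝ) : ℝ := (φ (D * a₀) + φ (2 * D * a₀)) / a₀

/-- Surface energy `S_b(D) := −½ φ(2 D a₀)`. -/
noncomputable def Sb (φ : ℝ → ℝ) (a₀ D : ℝ) : ℝ := -(φ (2 * D * a₀)) / 2

/-- Interfacial energy `S(D₁, D₂) := −½ φ(2D₁a₀) + φ(D₁a₀ + D₂a₀) − ½ φ(2D₂a₀)`. -/
noncomputable def Sint (φ : ℝ → ℝ) (a₀ D₁ D₂ : ℝ) : ℝ :=
  -(φ (2 * D₁ * a₀)) / 2 + φ (D₁ * a₀ + D₂ * a₀) - φ (2 * D₂ * a₀) / 2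

/-- Deformation gradient of the `j`th element: `D_j := r_j / a₀` where
`r_j = (z_{j+1} − z_j)/ν_j` and `ν_j = ℓ_{j+1} − ℓ_j`. -/
noncomputable def Dgrad (a₀ : ℝ) (ℓ : ℤ → ℤ) (z : ℤ → ℝ) (j : ℤ) : ℝ :=
  (z (j + 1) - z j) / (((ℓ (j + 1) - ℓ j : ℤ) : ℝ) * a₀)

lemma myIoc (p q : ℤ) : Finset.Ioc (p-1) q = Finset.Icc p q := by
  ext x; simp only [Finset.mem_Ioc, Finset.mem_Icc]; omega

lemma split_mid (f : ℤ → ℝ) {a m b : ℤ} (h1 : a ≤ m + 1) (h2 : m ≤ b) :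
    ∑ i ∈ Icc a b, f i = (∑ i ∈ Icc a m, f i) + ∑ i ∈ Icc (m+1) b, f i := by
  rw [← myIoc a b, ← myIoc a m, ← myIoc (m+1) b, show m+1-1 = m by ring]
  rw [← Finset.Ioc_union_Ioc_eq_Ioc (show a - 1 ≤ m by omega) h2,
    Finset.sum_union (by simp [Finset.disjoint_left]; omega)]

lemma split_top (f : ℤ → ℝ) {a b : ℤ} (h : a ≤ b + 1) :
    ∑ i ∈ Icc a (b+1), f i = (∑ i ∈ Icc a b, f i) + f (b+1) := by
  rw [split_mid f (m := b) h (by omega), Finset.Icc_self, Finset.sum_singleton]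

lemma split_bot (f : ℤ → ℝ) {a b : ℤ} (h : a ≤ b) :
    ∑ i ∈ Icc a b, f i = f a + ∑ i ∈ Icc (a+1) b, f i := by
  rw [split_mid f (m := a) (by omega) h, Finset.Icc_self, Finset.sum_singleton]

lemma sum_shift (f : ℤ → ℝ) (a b : ℤ) :
    ∑ j ∈ Icc (a+1) (b+1), f (j-1) = ∑ j ∈ Icc a b, f j := by
  rw [← Finset.map_add_right_Icc a b 1, Finset.sum_map]
  simp

noncomputable def Rfun (ℓ : ℤ → ℤ) (z : ℤ → ℝ) (j : ℤ) : ℝ :=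
  (z (j + 1) - z j) / ((ℓ (j + 1) - ℓ j : ℤ) : ℝ)

lemma elem1 (φ : ℝ → ℝ) (ℓ : ℤ → ℤ) (z y : ℤ → ℝ) (j : ℤ)
    (hlt : ℓ j < ℓ (j + 1))
    (hyj : ∀ i : ℤ, 0 ≤ i → i ≤ ℓ (j + 1) - ℓ j →
      y (ℓ j + i) = z j + (i : ℝ) * ((z (j + 1) - z j) / ((ℓ (j + 1) - ℓ j : ℤ) : ℝ))) :
    ∑ i ∈ Icc (ℓ j) (ℓ (j + 1) - 1), φ (y (i + 1) - y i)
      = ((ℓ (j + 1) - ℓ j : ℤ) : ℝ) * φ (Rfun ℓ z j) := by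
  have hc : ∀ i ∈ Icc (ℓ j) (ℓ (j + 1) - 1), φ (y (i + 1) - y i) = φ (Rfun ℓ z j) := by
    intro i hi
    rw [Finset.mem_Icc] at hi
    have h1 := hyj (i - ℓ j) (by omega) (by omega)
    have h2 := hyj (i + 1 - ℓ j) (by omega) (by omega)
    rw [show ℓ j + (i - ℓ j) = i by ring] at h1
    rw [show ℓ j + (i + 1 - ℓ j) = i + 1 by ring] at h2
    rw [h1, h2, Rfun]
    push_cast
    ring_nf
  rw [Finset.sum_congr rfl hc, Finset.sum_const, Int.card_Icc, nsmul_eq_mul]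
  congr 1
  have h0 : (0:ℤ) ≤ ℓ (j + 1) - 1 + 1 - ℓ j := by omega
  rw [show ((ℓ (j + 1) - 1 + 1 - ℓ j).toNat : ℝ) = (((ℓ (j + 1) - 1 + 1 - ℓ j).toNat : ℤ) : ℝ)
    by push_cast; ring, Int.toNat_of_nonneg h0]
  push_cast; ring

lemma elem2 (φ : ℝ → ℝ) (ℓ : ℤ → ℤ) (z y : ℤ → ℝ) (j : ℤ)
    (hlt : ℓ j < ℓ (j + 1))
    (hyj : ∀ i : ℤ, 0 ≤ i → i ≤ ℓ (j + 1) - ℓ j →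
      y (ℓ j + i) = z j + (i : ℝ) * ((z (j + 1) - z j) / ((ℓ (j + 1) - ℓ j : ℤ) : ℝ))) :
    ∑ i ∈ Icc (ℓ j) (ℓ (j + 1) - 2), φ (y (i + 2) - y i)
      = ((ℓ (j + 1) - ℓ j - 1 : ℤ) : ℝ) * φ (2 * Rfun ℓ z j) := by
  have hc : ∀ i ∈ Icc (ℓ j) (ℓ (j + 1) - 2), φ (y (i + 2) - y i) = φ (2 * Rfun ℓ z j) := by
    intro i hi
    rw [Finset.mem_Icc] at hi
    have h1 := hyj (i - ℓ j) (by omega) (by omega)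
    have h2 := hyj (i + 2 - ℓ j) (by omega) (by omega)
    rw [show ℓ j + (i - ℓ j) = i by ring] at h1
    rw [show ℓ j + (i + 2 - ℓ j) = i + 2 by ring] at h2
    rw [h1, h2, Rfun]
    push_cast
    ring_nf
  rw [Finset.sum_congr rfl hc, Finset.sum_const, Int.card_Icc, nsmul_eq_mul]
  congr 1
  have h0 : (0:ℤ) ≤ ℓ (j + 1) - 2 + 1 - ℓ j := by omega
  rw [show ((ℓ (j + 1) - 2 + 1 - ℓ j).toNat : ℝ) = (((ℓ (j + 1) - 2 + 1 - ℓ j).toNat : ℤ) : ℝ)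
    by push_cast; ring, Int.toNat_of_nonneg h0]
  push_cast; ring

lemma crossing (ℓ : ℤ → ℤ) (z y : ℤ → ℝ) (j : ℤ)
    (hlt : ℓ j < ℓ (j + 1)) (hlt' : ℓ (j + 1) < ℓ (j + 2))
    (hyj : ∀ i : ℤ, 0 ≤ i → i ≤ ℓ (j + 1) - ℓ j →
      y (ℓ j + i) = z j + (i : ℝ) * ((z (j + 1) - z j) / ((ℓ (j + 1) - ℓ j : ℤ) : ℝ)))
    (hyj' : ∀ i : ℤ, 0 ≤ i → i ≤ ℓ (j + 2) - ℓ (j + 1) →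
      y (ℓ (j + 1) + i) = z (j + 1) + (i : ℝ) * ((z (j + 2) - z (j + 1)) / ((ℓ (j + 2) - ℓ (j + 1) : ℤ) : ℝ))) :
    y (ℓ (j + 1) + 1) - y (ℓ (j + 1) - 1) = Rfun ℓ z j + Rfun ℓ z (j + 1) := by
  have h1 := hyj (ℓ (j + 1) - ℓ j - 1) (by omega) (by omega)
  have h2 := hyj' 1 (by omega) (by omega)
  rw [show ℓ j + (ℓ (j + 1) - ℓ j - 1) = ℓ (j + 1) - 1 by ring] at h1
  have hne : ((ℓ (j + 1) : ℤ) : ℝ) - ((ℓ j : ℤ) : ℝ) ≠ 0 := by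
    rw [sub_ne_zero]
    exact_mod_cast (by omega : (ℓ (j + 1) : ℤ) ≠ ℓ j)
  have hne' : ((ℓ (j + 2) : ℤ) : ℝ) - ((ℓ (j + 1) : ℤ) : ℝ) ≠ 0 := by
    rw [sub_ne_zero]
    exact_mod_cast (by omega : (ℓ (j + 2) : ℤ) ≠ ℓ (j + 1))
  rw [h1, h2, Rfun, Rfun, show j + 1 + 1 = j + 2 by ring]
  push_cast
  field_simp
  ring

lemma chain (N : ℤ) (ℓ : ℤ → ℤ) (hm : ∀ j ∈ Icc (-N) N, ℓ j < ℓ (j + 1)) :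
    ∀ k, -N ≤ k → k ≤ N + 1 → ℓ (-N) ≤ ℓ k := by
  intro k hk
  refine Int.le_induction (motive := fun k _ => k ≤ N + 1 → ℓ (-N) ≤ ℓ k) ?_ ?_ k hk
  · intro _; exact le_refl _
  · intro k hk ih hk2
    have h1 := hm k (by rw [Finset.mem_Icc]; omega)
    have h2 := ih (by omega)
    omega

lemma master (φ : ℝ → ℝ) (N : ℤ) (ℓ : ℤ → ℤ) (z y : ℤ → ℝ)
    (hm : ∀ j ∈ Icc (-N) N, ℓ j < ℓ (j + 1))
    (hy : ∀ j ∈ Icc (-N) N, ∀ i : ℤ, 0 ≤ i → i ≤ ℓ (j + 1) - ℓ j →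
      y (ℓ j + i) = z j + (i : ℝ) * ((z (j + 1) - z j) / ((ℓ (j + 1) - ℓ j : ℤ) : ℝ))) :
    ∀ b, -N ≤ b → b ≤ N →
      ((∑ i ∈ Icc (ℓ (-N)) (ℓ (b + 1) - 1), φ (y (i + 1) - y i))
          = ∑ j ∈ Icc (-N) b, ((ℓ (j + 1) - ℓ j : ℤ) : ℝ) * φ (Rfun ℓ z j))
      ∧ ((∑ i ∈ Icc (ℓ (-N)) (ℓ (b + 1) - 2), φ (y (i + 2) - y i))
          = (∑ j ∈ Icc (-N) b, ((ℓ (j + 1) - ℓ j - 1 : ℤ) : ℝ) * φ (2 * Rfun ℓ z j))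
            + ∑ j ∈ Icc (-N) (b - 1), φ (Rfun ℓ z j + Rfun ℓ z (j + 1))) := by
  intro b hb
  refine Int.le_induction (motive := fun b _ => b ≤ N →
      ((∑ i ∈ Icc (ℓ (-N)) (ℓ (b + 1) - 1), φ (y (i + 1) - y i))
          = ∑ j ∈ Icc (-N) b, ((ℓ (j + 1) - ℓ j : ℤ) : ℝ) * φ (Rfun ℓ z j))
      ∧ ((∑ i ∈ Icc (ℓ (-N)) (ℓ (b + 1) - 2), φ (y (i + 2) - y i))
          = (∑ j ∈ Icc (-N) b, ((ℓ (j + 1) - ℓ j - 1 : ℤ) : ℝ) * φ (2 * Rfun ℓ z j))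
            + ∑ j ∈ Icc (-N) (b - 1), φ (Rfun ℓ z j + Rfun ℓ z (j + 1)))) ?_ ?_ b hb
  · -- base case b = -N
    intro hbN
    have hmem : (-N) ∈ Icc (-N) N := by rw [Finset.mem_Icc]; omega
    have hlt := hm _ hmem
    have hyj := hy _ hmem
    constructor
    · rw [Finset.Icc_self, Finset.sum_singleton, elem1 φ ℓ z y (-N) hlt hyj]
    · rw [Finset.Icc_self, Finset.sum_singleton, elem2 φ ℓ z y (-N) hlt hyj,
        Finset.Icc_eq_empty (by omega : ¬ (-N : ℤ) ≤ -N - 1), Finset.sum_empty, add_zero]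
  · -- step
    intro b hb ih hbN
    obtain ⟨ih1, ih2⟩ := ih (by omega)
    have hmemb : b ∈ Icc (-N) N := by rw [Finset.mem_Icc]; omega
    have hmemb1 : (b + 1) ∈ Icc (-N) N := by rw [Finset.mem_Icc]; omega
    have hltb := hm _ hmemb
    have hltb1 := hm _ hmemb1
    have hchain : ℓ (-N) ≤ ℓ b := chain N ℓ hm b (by omega) (by omega)
    constructor
    · -- first-neighbor sum
      rw [split_mid (fun i => φ (y (i + 1) - y i)) (m := ℓ (b + 1) - 1)
          (by omega) (by omega),
        show ℓ (b + 1) - 1 + 1 = ℓ (b + 1) by ring, ih1,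
        split_top (fun j => ((ℓ (j + 1) - ℓ j : ℤ) : ℝ) * φ (Rfun ℓ z j)) (by omega),
        elem1 φ ℓ z y (b + 1) hltb1 (hy _ hmemb1)]
    · -- second-neighbor sum
      have hbp2 : b + 1 + 1 = b + 2 := by ring
      rw [split_mid (fun i => φ (y (i + 2) - y i)) (m := ℓ (b + 1) - 2)
          (by omega) (by omega), ih2,
        show ℓ (b + 1) - 2 + 1 = ℓ (b + 1) - 1 by ring,
        split_bot (fun i => φ (y (i + 2) - y i)) (by omega : ℓ (b + 1) - 1 ≤ ℓ (b + 1 + 1) - 2),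
        show ℓ (b + 1) - 1 + 1 = ℓ (b + 1) by ring,
        show ℓ (b + 1) - 1 + 2 = ℓ (b + 1) + 1 by ring,
        elem2 φ ℓ z y (b + 1) hltb1 (hy _ hmemb1),
        crossing ℓ z y b hltb (by rw [show b + 2 = b + 1 + 1 by ring]; exact hltb1) (hy _ hmemb) ?hy2,
        split_top (fun j => ((ℓ (j + 1) - ℓ j - 1 : ℤ) : ℝ) * φ (2 * Rfun ℓ z j)) (by omega),
        show b + 1 - 1 = b - 1 + 1 by ring,
        split_top (fun j => φ (Rfun ℓ z j + Rfun ℓ z (j + 1))) (by omega),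
        show b - 1 + 1 = b by ring]
      · ring
      case hy2 =>
        intro i h0 h1
        rw [show b + 2 = b + 1 + 1 by ring] at h1 ⊢
        exact hy _ hmemb1 i h0 h1

/-- The constrained quasicontinuum energy `E^CQC(z) = E^a(y(z))` decomposes into bulk,
surface, and interfacial parts:
`E^CQC(z) = Σ_j L_j W(D_j) + S_b(D_{−N}) + Σ_j S(D_{j−1}, D_j) + S_b(D_N)`,
where `L_j = ν_j a₀` and `y(z)` is the piecewise linear interpolant of the
representative positions `z`. -/
theorem stmt_5 (φ : ℝ → ℝ) (a₀ : ℝ) (ha₀ : 0 < a₀)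
    (M N : ℤ) (hN : 1 ≤ N) (ℓ : ℤ → ℤ)
    (hℓmono : ∀ j ∈ Icc (-N) N, ℓ j < ℓ (j + 1))
    (hℓl : ℓ (-N) = -M) (hℓr : ℓ (N + 1) = M + 1)
    (z : ℤ → ℝ) (hz : ∀ j ∈ Icc (-N) N, z j < z (j + 1))
    (y : ℤ → ℝ)
    (hy : ∀ j ∈ Icc (-N) N, ∀ i : ℤ, 0 ≤ i → i ≤ ℓ (j + 1) - ℓ j →
      y (ℓ j + i) = z j + (i : ℝ) * ((z (j + 1) - z j) / ((ℓ (j + 1) - ℓ j : ℤ) : ℝ))) :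
    (∑ i ∈ Icc (-M) M, φ (y (i + 1) - y i)) +
      (∑ i ∈ Icc (-M) (M - 1), φ (y (i + 2) - y i)) =
    (∑ j ∈ Icc (-N) N,
        ((ℓ (j + 1) - ℓ j : ℤ) : ℝ) * a₀ * Wdens φ a₀ (Dgrad a₀ ℓ z j)) +
      Sb φ a₀ (Dgrad a₀ ℓ z (-N)) +
      (∑ j ∈ Icc (-N + 1) N, Sint φ a₀ (Dgrad a₀ ℓ z (j - 1)) (Dgrad a₀ ℓ z j)) +
      Sb φ a₀ (Dgrad a₀ ℓ z N) := by
  have ha₀' : a₀ ≠ 0 := ne_of_gt ha₀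
  have hRa : ∀ j, Dgrad a₀ ℓ z j * a₀ = Rfun ℓ z j := by
    intro j
    rw [Dgrad, Rfun]
    rcases eq_or_ne ((ℓ (j + 1) - ℓ j : ℤ) : ℝ) 0 with hc | hc
    · simp [hc]
    · push_cast at hc ⊢
      rw [eq_div_iff hc]
      field_simp
  have hW : ∀ j, ((ℓ (j + 1) - ℓ j : ℤ) : ℝ) * a₀ * Wdens φ a₀ (Dgrad a₀ ℓ z j)
      = ((ℓ (j + 1) - ℓ j : ℤ) : ℝ) * φ (Rfun ℓ z j)
        + ((ℓ (j + 1) - ℓ j : ℤ) : ℝ) * φ (2 * Rfun ℓ z j) := by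
    intro j
    rw [Wdens, hRa j, show 2 * Dgrad a₀ ℓ z j * a₀ = 2 * Rfun ℓ z j by rw [mul_assoc, hRa j]]
    field_simp
  have hSb : ∀ j, Sb φ a₀ (Dgrad a₀ ℓ z j) = -(φ (2 * Rfun ℓ z j)) / 2 := by
    intro j
    rw [Sb, show 2 * Dgrad a₀ ℓ z j * a₀ = 2 * Rfun ℓ z j by rw [mul_assoc, hRa j]]
  have hSint : ∀ j, Sint φ a₀ (Dgrad a₀ ℓ z (j - 1)) (Dgrad a₀ ℓ z j)
      = -(φ (2 * Rfun ℓ z (j - 1))) / 2 + φ (Rfun ℓ z (j - 1) + Rfun ℓ z j)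
        - φ (2 * Rfun ℓ z j) / 2 := by
    intro j
    rw [Sint,
      show 2 * Dgrad a₀ ℓ z (j - 1) * a₀ = 2 * Rfun ℓ z (j - 1) by rw [mul_assoc, hRa],
      show 2 * Dgrad a₀ ℓ z j * a₀ = 2 * Rfun ℓ z j by rw [mul_assoc, hRa],
      show Dgrad a₀ ℓ z (j - 1) * a₀ + Dgrad a₀ ℓ z j * a₀
        = Rfun ℓ z (j - 1) + Rfun ℓ z j by rw [hRa, hRa]]
  have hsh : ∀ f : ℤ → ℝ, ∑ j ∈ Icc (-N + 1) N, f (j - 1) = ∑ j ∈ Icc (-N) (N - 1), f j := by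
    intro f
    have h := sum_shift f (-N) (N - 1)
    rw [show N - 1 + 1 = N by ring] at h
    exact h
  -- rewrite index ranges
  rw [show (-M : ℤ) = ℓ (-N) from hℓl.symm,
    show (M : ℤ) - 1 = ℓ (N + 1) - 2 by omega,
    show (M : ℤ) = ℓ (N + 1) - 1 by omega]
  obtain ⟨h1, h2⟩ := master φ N ℓ z y hℓmono hy N (by omega) le_rfl
  rw [h1, h2, Finset.sum_congr rfl (fun j _ => hW j), Finset.sum_add_distrib,
    hSb, hSb, Finset.sum_congr rfl (fun j _ => hSint j)]
  -- named auxiliary equalities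
  have hsub : ∑ j ∈ Icc (-N) N, ((ℓ (j + 1) - ℓ j - 1 : ℤ) : ℝ) * φ (2 * Rfun ℓ z j)
      = (∑ j ∈ Icc (-N) N, ((ℓ (j + 1) - ℓ j : ℤ) : ℝ) * φ (2 * Rfun ℓ z j))
        - ∑ j ∈ Icc (-N) N, φ (2 * Rfun ℓ z j) := by
    rw [← Finset.sum_sub_distrib]
    refine Finset.sum_congr rfl fun j _ => ?_
    push_cast
    ring
  have hsplit3 : ∑ j ∈ Icc (-N + 1) N,
        (-(φ (2 * Rfun ℓ z (j - 1))) / 2 + φ (Rfun ℓ z (j - 1) + Rfun ℓ z j)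
          - φ (2 * Rfun ℓ z j) / 2)
      = (∑ j ∈ Icc (-N + 1) N, -(φ (2 * Rfun ℓ z (j - 1))) / 2)
        + (∑ j ∈ Icc (-N + 1) N, φ (Rfun ℓ z (j - 1) + Rfun ℓ z j))
        - ∑ j ∈ Icc (-N + 1) N, φ (2 * Rfun ℓ z j) / 2 := by
    rw [← Finset.sum_add_distrib, ← Finset.sum_sub_distrib]
  have e1 : (∑ j ∈ Icc (-N + 1) N, -(φ (2 * Rfun ℓ z (j - 1))) / 2)
      = ∑ j ∈ Icc (-N) (N - 1), -(φ (2 * Rfun ℓ z j)) / 2 :=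
    hsh (fun j => -(φ (2 * Rfun ℓ z j)) / 2)
  have e1' : (∑ j ∈ Icc (-N) (N - 1), -(φ (2 * Rfun ℓ z j)) / 2)
      = -(∑ j ∈ Icc (-N) (N - 1), φ (2 * Rfun ℓ z j)) / 2 := by
    rw [← Finset.sum_div, Finset.sum_neg_distrib, neg_div]
  have e3 : (∑ j ∈ Icc (-N + 1) N, φ (2 * Rfun ℓ z j) / 2)
      = (∑ j ∈ Icc (-N + 1) N, φ (2 * Rfun ℓ z j)) / 2 := by
    rw [← Finset.sum_div]
  have hC : ∑ j ∈ Icc (-N + 1) N, φ (Rfun ℓ z (j - 1) + Rfun ℓ z j)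
      = ∑ j ∈ Icc (-N) (N - 1), φ (Rfun ℓ z j + Rfun ℓ z (j + 1)) := by
    rw [← hsh (fun j => φ (Rfun ℓ z j + Rfun ℓ z (j + 1)))]
    refine Finset.sum_congr rfl fun j _ => ?_
    rw [show j - 1 + 1 = j by ring]
  have hTtop : ∑ j ∈ Icc (-N) N, φ (2 * Rfun ℓ z j)
      = (∑ j ∈ Icc (-N) (N - 1), φ (2 * Rfun ℓ z j)) + φ (2 * Rfun ℓ z N) := by
    have h := split_top (fun j => φ (2 * Rfun ℓ z j)) (show -N ≤ (N - 1) + 1 by omega)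
    rw [show N - 1 + 1 = N by ring] at h
    exact h
  have hTbot : ∑ j ∈ Icc (-N) N, φ (2 * Rfun ℓ z j)
      = φ (2 * Rfun ℓ z (-N)) + ∑ j ∈ Icc (-N + 1) N, φ (2 * Rfun ℓ z j) :=
    split_bot _ (by omega)
  rw [hsub, hsplit3, e1, e1', e3, hC]
  linarith [hTtop, hTbot]
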